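/- Let $\Phi_1 : X \to Y$ and $\Phi_2 : Y \to Z$ be dill maps with implementations $\phi_1$ and $\phi_2$. Then $\Phi_2 \circ \Phi_1 : X \to Z$ is a dill map, and the function $\phi(x) = {}^{|\phi_1(x)|}\phi_2({}^{\infty}\phi_1(x))$ is an implementation of $\Phi_2 \circ \Phi_1$. -/

import Mathlib

open Filter Topology

section Defs

variable {A : Type*} {B : Type*} {C : Type*}

/-- The one-sided shift map. -/
def shift (x : ℕ → A) : ℕ → A := fun n => x (n + 1)

/-- A (one-sided) subshift: a closed, shift-invariant set of configurations. -/
def Subshift [TopologicalSpace A] (X : Set (ℕ → A)) : Prop :=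
  IsClosed X ∧ ∀ x ∈ X, shift x ∈ X

/-- `X` is uniformly recurrent: every pattern occurring in `X` occurs in every
sufficiently long window of every point of `X`. -/
def UniformlyRecurrent (X : Set (ℕ → A)) : Prop :=
  ∀ x ∈ X, ∀ l : ℕ, ∃ N : ℕ, ∀ y ∈ X, ∃ i < N, ∀ k < l, y (i + k) = x k

/-- A block map: a continuous shift-commuting map. -/
def BlockMap [TopologicalSpace A] [TopologicalSpace B] (X : Set (ℕ → A)) (Y : Set (ℕ → B))
    (f : (ℕ → A) → (ℕ → B)) : Prop :=
  Set.MapsTo f X Y ∧ ContinuousOn f X ∧ ∀ x ∈ X, f (shift x) = shift (f x)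

/-- `s` is a cocycle for `Φ` on `X`: `Φ (σ x) = σ^(s x) (Φ x)`. -/
def IsCocycle (X : Set (ℕ → A)) (Φ : (ℕ → A) → (ℕ → B)) (s : (ℕ → A) → ℕ) : Prop :=
  ∀ x ∈ X, ∀ n : ℕ, Φ (shift x) n = Φ x (n + s x)

/-- A dill map: a continuous map with a continuous cocycle which is nontrivial
along every orbit. -/
def DillMap [TopologicalSpace A] [TopologicalSpace B] (X : Set (ℕ → A)) (Y : Set (ℕ → B))
    (Φ : (ℕ → A) → (ℕ → B)) : Prop :=
  Set.MapsTo Φ X Y ∧ ContinuousOn Φ X ∧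
    ∃ s : (ℕ → A) → ℕ, ContinuousOn s X ∧ IsCocycle X Φ s ∧
      ∀ x ∈ X, ∃ n : ℕ, 0 < s (shift^[n] x)

/-- Continuity (local constancy) of a word-valued function on `X`. -/
def WordContinuousOn (φ : (ℕ → A) → List B) (X : Set (ℕ → A)) : Prop :=
  ∀ x ∈ X, ∃ R : ℕ, ∀ y ∈ X, (∀ k ≤ R, y k = x k) → φ y = φ x

/-- `φ` is an implementation of `Φ` on `X`:
`Φ x = φ x ++ φ (σ x) ++ φ (σ² x) ++ ⋯`, expressed coordinatewise. -/
def IsImplementation (X : Set (ℕ → A)) (Φ : (ℕ → A) → (ℕ → B))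
    (φ : (ℕ → A) → List B) : Prop :=
  WordContinuousOn φ X ∧ ∀ x ∈ X, ∀ n : ℕ,
    Φ x n = if h : n < (φ x).length then (φ x).get ⟨n, h⟩
            else Φ (shift x) (n - (φ x).length)

/-- `ⁿφ(x) = φ(x) φ(σ x) ⋯ φ(σ^(n-1) x)`. -/
def iterWord (φ : (ℕ → A) → List B) (x : ℕ → A) : ℕ → List B
  | 0 => []
  | n + 1 => iterWord φ x n ++ φ (shift^[n] x)

/-- The invariant `Z`: `|ⁿφ(x)|/n → lam` for every `x ∈ X`. -/
def HasZ (X : Set (ℕ → A)) (φ : (ℕ → A) → List B) (lam : ℝ) : Prop :=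
  ∀ x ∈ X, Tendsto (fun n : ℕ => ((iterWord φ x n).length : ℝ) / n) atTop (𝓝 lam)

/-- `D` is a deviation bound: `| |ⁿφ(x)| - lam·n | ≤ D` for all `x ∈ X`, `n`. -/
def HasDBound (X : Set (ℕ → A)) (φ : (ℕ → A) → List B) (lam D : ℝ) : Prop :=
  ∀ x ∈ X, ∀ n : ℕ, |((iterWord φ x n).length : ℝ) - lam * n| ≤ D

/-- `R` is an in-radius bound for `φ` on `X`: `φ x` only depends on `x_[0,R]`. -/
def HasInRadius (X : Set (ℕ → A)) (φ : (ℕ → A) → List B) (R : ℕ) : Prop :=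
  ∀ x ∈ X, ∀ y ∈ X, (∀ k ≤ R, x k = y k) → φ x = φ y

/-- Almost equivalence: images of every point agree up to shifts. -/
def AlmostEquiv (X : Set (ℕ → A)) (Φ Ψ : (ℕ → A) → (ℕ → B)) : Prop :=
  ∀ x ∈ X, ∃ i j : ℕ, shift^[i] (Φ x) = shift^[j] (Ψ x)

/-- The implementation of the composition of two dill maps. -/
def compImpl (φ₁ : (ℕ → A) → List B) (Φ₁ : (ℕ → A) → (ℕ → B))
    (φ₂ : (ℕ → B) → List C) (x : ℕ → A) : List C :=
  iterWord φ₂ (Φ₁ x) (φ₁ x).length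

/-- Extension of a substitution to words. -/
def wordApply (τ : A → List A) (w : List A) : List A := (w.map τ).flatten

/-- Iterated image `τⁿ(a)` of a letter. -/
def subPow (τ : A → List A) : ℕ → A → List A
  | 0, a => [a]
  | n + 1, a => wordApply τ (subPow τ n a)

/-- The language of the substitution `τ`: infixes of the `τⁿ(a)`. -/
def InLanguage (τ : A → List A) (w : List A) : Prop :=
  ∃ a n, w <:+: subPow τ n a

/-- The one-sided subshift of the substitution `τ`. -/
def Xsub (τ : A → List A) : Set (ℕ → A) :=
  {x | ∀ i l : ℕ, InLanguage τ (List.ofFn fun k : Fin l => x (i + k))}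

/-- Primitivity of a substitution. -/
def Primitive (τ : A → List A) : Prop :=
  ∃ N, ∀ n ≥ N, ∀ a b : A, a ∈ subPow τ n b

/-- The word `w` occurs in `x` at position `i`. -/
def occursAt (w : List A) (x : ℕ → A) (i : ℕ) : Prop :=
  w = List.ofFn fun k : Fin w.length => x (i + k)

/-- The action of a (non-erasing) substitution on one-sided configurations. -/
def subApply [Inhabited A] (τ : A → List A) (x : ℕ → A) : ℕ → A :=
  fun n => (wordApply τ (List.ofFn fun k : Fin (n + 1) => x k)).getD n default

end Defs

section Aux

variable {A B C : Type*}

lemma shift_iter (x : ℕ → A) (k n : ℕ) : shift^[k] x n = x (n + k) := by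
  induction k generalizing n with
  | zero => rfl
  | succ k ih =>
    rw [Function.iterate_succ_apply', shift, ih]
    ring_nf

lemma mem_shift_iter {Y : Set (ℕ → A)} [TopologicalSpace A] (hY : Subshift Y)
    {y : ℕ → A} (hy : y ∈ Y) (k : ℕ) : shift^[k] y ∈ Y := by
  induction k with
  | zero => exact hy
  | succ k ih => rw [Function.iterate_succ_apply']; exact hY.2 _ ih

/-- Cylinder sets form a neighborhood basis. -/
lemma cyl_subset_nhds [TopologicalSpace A] [DiscreteTopology A] (x : ℕ → A)
    {U : Set (ℕ → A)} (hU : U ∈ 𝓝 x) :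
    ∃ R : ℕ, ∀ y : ℕ → A, (∀ k ≤ R, y k = x k) → y ∈ U := by
  rw [nhds_pi, Filter.mem_pi] at hU
  obtain ⟨I, hI, s, hs, hsub⟩ := hU
  refine ⟨hI.toFinset.sup id, fun y hy => hsub ?_⟩
  intro i hi
  have hiR : i ≤ hI.toFinset.sup id := Finset.le_sup (f := id) (hI.mem_toFinset.2 hi)
  rw [hy i hiR]
  exact mem_of_mem_nhds (hs i)

lemma iterWord_congr {φ : (ℕ → A) → List B} {a b : ℕ → A} :
    ∀ n : ℕ, (∀ i < n, φ (shift^[i] a) = φ (shift^[i] b)) →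
      iterWord φ a n = iterWord φ b n := by
  intro n
  induction n with
  | zero => intro _; rfl
  | succ n ih =>
    intro h
    simp only [iterWord, ih (fun i hi => h i (Nat.lt_succ_of_lt hi)),
      h n (Nat.lt_succ_self n)]

/-- Iterated form of the implementation equation. -/
lemma iter_impl [TopologicalSpace B] {Y : Set (ℕ → B)} {Φ : (ℕ → B) → (ℕ → C)}
    {φ : (ℕ → B) → List C} (hY : Subshift Y) (hφ : IsImplementation Y Φ φ) :
    ∀ y ∈ Y, ∀ k n : ℕ,
      Φ y n = if h : n < (iterWord φ y k).length then (iterWord φ y k).get ⟨n, h⟩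
        else Φ (shift^[k] y) (n - (iterWord φ y k).length) := by
  intro y hy k
  induction k with
  | zero => intro n; simp [iterWord]
  | succ k ih =>
    intro n
    have h2 := hφ.2 (shift^[k] y) (mem_shift_iter hY hy k) (n - (iterWord φ y k).length)
    rw [show shift (shift^[k] y) = shift^[k+1] y from (Function.iterate_succ_apply' shift k y).symm] at h2
    set L := iterWord φ y k with hL
    set w := φ (shift^[k] y) with hw
    have hlen : (iterWord φ y (k + 1)).length = L.length + w.length := by
      simp [iterWord, ← hL, ← hw]
    rcases lt_or_ge n L.length with h | h
    · rw [ih n]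
      have h' : n < (iterWord φ y (k + 1)).length := by omega
      rw [dif_pos h, dif_pos h']
      simp only [List.get_eq_getElem, iterWord, ← hL, ← hw]
      exact (List.getElem_append_left h).symm
    · rw [ih n, dif_neg (not_lt.2 h), h2]
      rcases lt_or_ge n (L.length + w.length) with h3 | h3
      · have h4 : n - L.length < w.length := by omega
        have h' : n < (iterWord φ y (k + 1)).length := by omega
        rw [dif_pos h4, dif_pos h']
        simp only [List.get_eq_getElem, iterWord, ← hL, ← hw]
        rw [List.getElem_append_right h]
      · have h4 : ¬ n - L.length < w.length := by omega
        have h' : ¬ n < (iterWord φ y (k + 1)).length := by omega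
        rw [dif_neg h4, dif_neg h']
        congr 1
        omega

/-- Iterated form of the cocycle equation. -/
lemma cocycle_iter {Y : Set (ℕ → B)} [TopologicalSpace B] {Φ : (ℕ → B) → (ℕ → C)}
    {s : (ℕ → B) → ℕ} (hY : Subshift Y) (hs : IsCocycle Y Φ s) :
    ∀ y ∈ Y, ∀ k n : ℕ,
      Φ (shift^[k] y) n = Φ y (n + ∑ i ∈ Finset.range k, s (shift^[i] y)) := by
  intro y hy k
  induction k with
  | zero => simp
  | succ k ih =>
    intro n
    rw [Function.iterate_succ_apply', hs (shift^[k] y) (mem_shift_iter hY hy k) n,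
      ih (n + s (shift^[k] y)), Finset.sum_range_succ]
    ring_nf

lemma locally_const {α β : Type*} [TopologicalSpace α] [TopologicalSpace β] [DiscreteTopology β]
    {X : Set α} {f : α → β} {x : α} (h : ContinuousWithinAt f X x) :
    ∀ᶠ y in 𝓝[X] x, f y = f x := by
  have hs : {f x} ∈ 𝓝 (f x) := by simp [nhds_discrete]
  exact h.tendsto hs

lemma eventually_eq_apply {β : Type*} [TopologicalSpace β] [DiscreteTopology β]
    (x : ℕ → β) (k : ℕ) : ∀ᶠ z in 𝓝 x, z k = x k := by
  have hs : {x k} ∈ 𝓝 (x k) := by simp [nhds_discrete]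
  exact (continuous_apply k).tendsto x hs

lemma continuous_shift_iter {β : Type*} [TopologicalSpace β] (i : ℕ) :
    Continuous (fun y : ℕ → β => shift^[i] y) := by
  apply continuous_pi
  intro n
  simp only [shift_iter]
  exact continuous_apply _

end Aux

/-- the composition of two dill maps is a dill map, with
implementation `φ(x) = ^{|φ₁(x)|}φ₂(^∞φ₁(x))`. -/
theorem stmt6 {A B C : Type*} [Fintype A] [Fintype B] [Fintype C]
    [TopologicalSpace A] [DiscreteTopology A] [TopologicalSpace B] [DiscreteTopology B]
    [TopologicalSpace C] [DiscreteTopology C]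
    (X : Set (ℕ → A)) (Y : Set (ℕ → B)) (Z : Set (ℕ → C))
    (hX : Subshift X) (hY : Subshift Y) (hZ : Subshift Z)
    (Φ₁ : (ℕ → A) → (ℕ → B)) (Φ₂ : (ℕ → B) → (ℕ → C))
    (hΦ₁ : DillMap X Y Φ₁) (hΦ₂ : DillMap Y Z Φ₂)
    (φ₁ : (ℕ → A) → List B) (φ₂ : (ℕ → B) → List C)
    (hφ₁ : IsImplementation X Φ₁ φ₁) (hφ₂ : IsImplementation Y Φ₂ φ₂) :
    DillMap X Z (Φ₂ ∘ Φ₁) ∧ IsImplementation X (Φ₂ ∘ Φ₁) (compImpl φ₁ Φ₁ φ₂) := by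
  classical
  obtain ⟨hm₁, hc₁, s₁, hs₁c, hs₁, hnt₁⟩ := hΦ₁
  obtain ⟨hm₂, hc₂, s₂, hs₂c, hs₂, hnt₂⟩ := hΦ₂
  -- Φ₁ along iterates of the shift
  have hΦ₁iter : ∀ x ∈ X, ∀ n : ℕ,
      Φ₁ (shift^[n] x) = shift^[∑ j ∈ Finset.range n, s₁ (shift^[j] x)] (Φ₁ x) := by
    intro x hx n
    induction n with
    | zero => simp
    | succ n ih =>
      funext m
      rw [Function.iterate_succ_apply', hs₁ (shift^[n] x) (mem_shift_iter hX hx n) m, ih,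
        shift_iter, shift_iter]
      congr 1
      rw [Finset.sum_range_succ]
      ring
  set S : (ℕ → A) → ℕ := fun x => ∑ i ∈ Finset.range (s₁ x), s₂ (shift^[i] (Φ₁ x)) with hS
  have hmapsTo : Set.MapsTo (Φ₂ ∘ Φ₁) X Z := hm₂.comp hm₁
  have hcontC : ContinuousOn (Φ₂ ∘ Φ₁) X := hc₂.comp hc₁ hm₁
  -- continuity of the cocycle S
  have hScont : ContinuousOn S X := by
    intro x hx
    have h1 : ∀ᶠ y in 𝓝[X] x, s₁ y = s₁ x := locally_const (hs₁c x hx)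
    have h2 : ∀ᶠ y in 𝓝[X] x, ∀ i ∈ Finset.range (s₁ x),
        s₂ (shift^[i] (Φ₁ y)) = s₂ (shift^[i] (Φ₁ x)) := by
      rw [Filter.eventually_all_finset]
      intro i _
      exact locally_const ((hs₂c.comp ((continuous_shift_iter i).comp_continuousOn hc₁)
        (fun y hy => mem_shift_iter hY (hm₁ hy) i)) x hx)
    have hev : ∀ᶠ y in 𝓝[X] x, S y = S x := by
      filter_upwards [h1, h2] with y hy1 hy2
      rw [hS]
      simp only [hy1]
      exact Finset.sum_congr rfl hy2
    exact Filter.Tendsto.congr' (hev.mono fun y hy => hy.symm) tendsto_const_nhds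
  -- cocycle property
  have hcoc : IsCocycle X (Φ₂ ∘ Φ₁) S := by
    intro x hx n
    have h1 : Φ₁ (shift x) = shift^[s₁ x] (Φ₁ x) := by
      have := hΦ₁iter x hx 1
      simpa using this
    simp only [Function.comp_apply, h1]
    exact cocycle_iter hY hs₂ (Φ₁ x) (hm₁ hx) (s₁ x) n
  -- nontriviality
  have hnt : ∀ x ∈ X, ∃ n : ℕ, 0 < S (shift^[n] x) := by
    intro x hx
    obtain ⟨m, hm⟩ := hnt₂ (Φ₁ x) (hm₁ hx)
    set T : ℕ → ℕ := fun n => ∑ j ∈ Finset.range n, s₁ (shift^[j] x) with hT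
    have hTmono : Monotone T := fun a b hab =>
      Finset.sum_le_sum_of_subset (Finset.range_subset_range.2 hab)
    have hgrow : ∀ k : ℕ, ∃ n, k < T n := by
      intro k
      induction k with
      | zero =>
        obtain ⟨j, hj⟩ := hnt₁ x hx
        refine ⟨j + 1, ?_⟩
        have h1 : s₁ (shift^[j] x) ≤ T (j + 1) := by
          simp only [hT]
          exact Finset.single_le_sum (f := fun i => s₁ (shift^[i] x))
            (fun i _ => Nat.zero_le _) (Finset.self_mem_range_succ j)
        omega
      | succ k ih =>
        obtain ⟨n, hn⟩ := ih
        obtain ⟨j, hj⟩ := hnt₁ (shift^[n] x) (mem_shift_iter hX hx n)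
        rw [← Function.iterate_add_apply] at hj
        have hj' : 0 < s₁ (shift^[n + j] x) := by rw [Nat.add_comm n j]; exact hj
        refine ⟨n + j + 1, ?_⟩
        have h1 : T (n + j + 1) = T (n + j) + s₁ (shift^[n + j] x) := Finset.sum_range_succ _ _
        have h2 : T n ≤ T (n + j) := hTmono (by omega)
        omega
    obtain hP := hgrow m
    have hne : Nat.find hP ≠ 0 := by
      intro h0
      have := Nat.find_spec hP
      rw [h0] at this
      simp [hT] at this
    obtain ⟨n', hn'⟩ := Nat.exists_eq_succ_of_ne_zero hne
    have hspec : m < T (n' + 1) := by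
      have := Nat.find_spec hP
      rw [hn'] at this
      exact this
    have hlow : ¬ m < T n' := Nat.find_min hP (by omega)
    have hTsucc : T (n' + 1) = T n' + s₁ (shift^[n'] x) := Finset.sum_range_succ _ _
    have hi : m - T n' < s₁ (shift^[n'] x) := by omega
    refine ⟨n', ?_⟩
    have hterm : s₂ (shift^[m - T n'] (Φ₁ (shift^[n'] x))) = s₂ (shift^[m] (Φ₁ x)) := by
      rw [hΦ₁iter x hx n', ← Function.iterate_add_apply]
      have : m - T n' + T n' = m := by omega
      rw [this]
    have hle : s₂ (shift^[m - T n'] (Φ₁ (shift^[n'] x))) ≤ S (shift^[n'] x) := by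
      simp only [hS]
      exact Finset.single_le_sum (f := fun i => s₂ (shift^[i] (Φ₁ (shift^[n'] x))))
        (fun i _ => Nat.zero_le _) (Finset.mem_range.2 hi)
    rw [hterm] at hle
    omega
  refine ⟨⟨hmapsTo, hcontC, S, hScont, hcoc, hnt⟩, ?_, ?_⟩
  · -- word continuity of the composed implementation
    intro x hx
    obtain ⟨R₁, hR₁⟩ := hφ₁.1 x hx
    set m := (φ₁ x).length with hmdef
    have hYmem : ∀ i : ℕ, shift^[i] (Φ₁ x) ∈ Y := fun i => mem_shift_iter hY (hm₁ hx) i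
    choose R₂ hR₂ using fun i => hφ₂.1 (shift^[i] (Φ₁ x)) (hYmem i)
    set M := Finset.sup (Finset.range m) (fun i => i + R₂ i) with hM
    have hU : {z : ℕ → B | ∀ k ≤ M, z k = Φ₁ x k} ∈ 𝓝 (Φ₁ x) := by
      have hev : ∀ᶠ z in 𝓝 (Φ₁ x), ∀ k ∈ Finset.range (M + 1), z k = Φ₁ x k := by
        rw [Filter.eventually_all_finset]
        intro k _
        exact eventually_eq_apply (Φ₁ x) k
      filter_upwards [hev] with z hz k hk using hz k (Finset.mem_range.2 (by omega))
    have hpre : Φ₁ ⁻¹' {z : ℕ → B | ∀ k ≤ M, z k = Φ₁ x k} ∈ 𝓝[X] x := (hc₁ x hx).tendsto hU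
    rw [mem_nhdsWithin] at hpre
    obtain ⟨u, hu_open, hxu, hsub⟩ := hpre
    obtain ⟨R₀, hR₀⟩ := cyl_subset_nhds x (hu_open.mem_nhds hxu)
    refine ⟨max R₀ R₁, fun y hy hagree => ?_⟩
    have hφ₁eq : φ₁ y = φ₁ x := hR₁ y hy (fun k hk => hagree k (le_trans hk (le_max_right _ _)))
    have hyu : y ∈ u := hR₀ y (fun k hk => hagree k (le_trans hk (le_max_left _ _)))
    have hΦagree : ∀ k ≤ M, Φ₁ y k = Φ₁ x k := hsub ⟨hyu, hy⟩
    have hwords : ∀ i < m, φ₂ (shift^[i] (Φ₁ y)) = φ₂ (shift^[i] (Φ₁ x)) := by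
      intro i hi
      apply hR₂ i (shift^[i] (Φ₁ y)) (mem_shift_iter hY (hm₁ hy) i)
      intro k hk
      rw [shift_iter, shift_iter]
      apply hΦagree
      calc k + i ≤ R₂ i + i := by omega
        _ = i + R₂ i := by ring
        _ ≤ M := Finset.le_sup (f := fun i => i + R₂ i) (Finset.mem_range.2 hi)
    show iterWord φ₂ (Φ₁ y) (φ₁ y).length = iterWord φ₂ (Φ₁ x) (φ₁ x).length
    rw [hφ₁eq]
    exact iterWord_congr m hwords
  · -- the implementation equation
    intro x hx n
    have key := iter_impl hY hφ₂ (Φ₁ x) (hm₁ hx) (φ₁ x).length n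
    have hshift : shift^[(φ₁ x).length] (Φ₁ x) = Φ₁ (shift x) := by
      funext k
      rw [shift_iter, hφ₁.2 x hx (k + (φ₁ x).length), dif_neg (by omega)]
      congr 1
      omega
    simp only [Function.comp_apply]
    show Φ₂ (Φ₁ x) n = _
    rw [key, hshift]
    rfl
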